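/- arXiv:1207.5551 — 2 statements merged into one kernel-verified Lean document; each statement's English description precedes it below -/
import Mathlib

section
/- For every cube Q in ℝⁿ (half-open, sides parallel to the axes) there exists t ∈ {0, 1/3}ⁿ and a cube Q_t in the shifted dyadic grid 𝒟^t = {2^{-k}([0,1)^n + m + (-1)^k t) : k ∈ ℤ, m ∈ ℤⁿ} such that Q ⊆ Q_t and ℓ(Q_t) ≤ 6 ℓ(Q). -/
open MeasureTheory Set
open scoped ENNReal NNReal

noncomputable section

/-- A half-open cube in `ℝⁿ` with sides parallel to the axes. -/
structure Cube (n : ℕ) where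
  corner : EuclideanSpace ℝ (Fin n)
  side : ℝ
  side_pos : 0 < side

/-- The underlying set of a cube: `∏ [cᵢ, cᵢ + ℓ)`. -/
def Cube.set {n : ℕ} (Q : Cube n) : Set (EuclideanSpace ℝ (Fin n)) :=
  {x | ∀ i, Q.corner i ≤ x i ∧ x i < Q.corner i + Q.side}

/-- A dyadic grid: a countable family of cubes with dyadic side lengths, nested or disjoint,
whose cubes of each fixed side length `2^k` partition `ℝⁿ`. -/
def IsDyadicGrid {n : ℕ} (D : Set (Cube n)) : Prop :=
  D.Countable ∧
  (∀ Q ∈ D, ∃ k : ℤ, Q.side = 2 ^ k) ∧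
  (∀ Q ∈ D, ∀ P ∈ D, Q.set ∩ P.set = ∅ ∨ Q.set ∩ P.set = P.set ∨ Q.set ∩ P.set = Q.set) ∧
  (∀ (k : ℤ) (x : EuclideanSpace ℝ (Fin n)), ∃! Q : Cube n, Q ∈ D ∧ Q.side = 2 ^ k ∧ x ∈ Q.set)

/-- The shifted dyadic grid `𝒟^t = {2^{-k}([0,1)ⁿ + m + (-1)^k t)}`. -/
def shiftedGrid (n : ℕ) (t : Fin n → ℝ) : Set (Cube n) :=
  {Q | ∃ (k : ℤ) (m : Fin n → ℤ), Q.side = (2 : ℝ) ^ (-k) ∧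
    ∀ i, Q.corner i = (2 : ℝ) ^ (-k) * (((m i : ℝ)) + ((-1 : ℝ)) ^ k * t i)}

/-- The shift `t ∈ {0, 1/3}ⁿ` encoded by a boolean vector. -/
def shiftOf {n : ℕ} (t : Fin n → Bool) : Fin n → ℝ := fun i => if t i then 1 / 3 else 0

/-- Every cube is contained in a cube of one of the shifted dyadic grids `𝒟^t`,
`t ∈ {0,1/3}ⁿ`, of at most `6` times its side length. -/
theorem statement0 (n : ℕ) (Q : Cube n) :
    ∃ (t : Fin n → Bool) (Qt : Cube n), Qt ∈ shiftedGrid n (shiftOf t) ∧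
      Q.set ⊆ Qt.set ∧ Qt.side ≤ 6 * Q.side := by
  classical
  obtain ⟨n0, h1, h2⟩ : ∃ n0 : ℤ, (2:ℝ) ^ n0 ≤ 3 * Q.side ∧ 3 * Q.side < 2 ^ (n0 + 1) := by
    obtain ⟨n0, h⟩ := exists_mem_Ico_zpow (x := 3 * Q.side) (y := (2:ℝ))
      (by have := Q.side_pos; linarith) (by norm_num)
    exact ⟨n0, h.1, h.2⟩
  set s := Q.side with hs
  have hspos : 0 < s := Q.side_pos
  set c := Q.corner with hc
  set k : ℤ := -(n0 + 1) with hk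
  set L : ℝ := (2:ℝ) ^ (-k) with hL
  have hLval : L = (2:ℝ) ^ (n0 + 1) := by rw [hL, hk, neg_neg]
  have hLpos : 0 < L := by rw [hLval]; positivity
  have hsL : 3 * s < L := by rw [hLval]; exact h2
  have hL6 : L ≤ 6 * s := by
    rw [hLval, zpow_add₀ (by norm_num : (2:ℝ) ≠ 0), zpow_one]
    nlinarith
  have hεcases : ((-1:ℝ)) ^ k = 1 ∨ ((-1:ℝ)) ^ k = -1 := by
    rcases Int.even_or_odd k with h | h
    · exact Or.inl h.neg_one_zpow
    · exact Or.inr h.neg_one_zpow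
  set ε : ℝ := ((-1:ℝ)) ^ k with hε
  set e : ℤ := if ε = 1 then 0 else 1 with he
  set t : Fin n → Bool := fun i => decide (L * (⌊c i / L⌋ + 1) < c i + s) with ht
  set m : Fin n → ℤ := fun i => ⌊c i / L⌋ + (if t i then e else 0) with hm
  refine ⟨t, ⟨WithLp.toLp 2 (fun i => (2:ℝ) ^ (-k) * ((m i : ℝ) + ε * shiftOf t i)), L, hLpos⟩,
    ⟨k, m, hL, fun i => rfl⟩, ?_, hL6⟩
  intro x hx i
  have hxi := hx i
  simp only [Cube.set, Set.mem_setOf_eq, PiLp.toLp_apply] at hxi ⊢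
  rw [← hc, ← hs] at hxi
  set m0 : ℤ := ⌊c i / L⌋ with hm0
  have hm0a : L * (m0 : ℝ) ≤ c i := by
    have h := Int.floor_le (c i / L)
    rw [← hm0] at h
    calc L * (m0 : ℝ) ≤ L * (c i / L) := by
          exact mul_le_mul_of_nonneg_left h hLpos.le
      _ = c i := by field_simp
  have hm0b : c i < L * ((m0 : ℝ) + 1) := by
    have h := Int.lt_floor_add_one (c i / L)
    rw [← hm0] at h
    calc c i = L * (c i / L) := by field_simp
      _ < L * ((m0 : ℝ) + 1) := by
          exact mul_lt_mul_of_pos_left (by exact_mod_cast h) hLpos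
  by_cases hcr : L * ((m0 : ℝ) + 1) < c i + s
  · -- crossing case: t i = true
    have hti : t i = true := by simp [ht, ← hm0, hcr]
    have hmi : (m i : ℝ) = (m0 : ℝ) + (e : ℝ) := by
      rw [hm]; simp [hti, hm0]
    have hsh : shiftOf t i = 1 / 3 := by simp [shiftOf, hti]
    -- corner bounds
    have hcorner : (2:ℝ) ^ (-k) * ((m i : ℝ) + ε * shiftOf t i)
        = L * ((m0 : ℝ) + (e : ℝ) + ε / 3) := by
      rw [← hL, hmi, hsh]; ring
    have hbounds : L * ((m0 : ℝ) + (e : ℝ) + ε / 3) ≤ L * ((m0 : ℝ) + 1) - L / 3 ∧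
        L * ((m0 : ℝ) + 1) + L / 3 ≤ L * ((m0 : ℝ) + (e : ℝ) + ε / 3) + L := by
      rcases hεcases with h | h
      · have he0 : e = 0 := by rw [he, if_pos h]
        rw [h, he0]
        push_cast
        constructor <;> linarith only [hLpos]
      · have he1 : e = 1 := by
          rw [he, if_neg]; rw [h]; norm_num
        rw [h, he1]
        push_cast
        constructor <;> linarith only [hLpos]
    rw [hcorner]
    constructor
    · linarith only [hbounds.1, hxi.1, hcr, hsL]
    · linarith only [hbounds.2, hxi.2, hm0b, hsL]
  · -- non-crossing: t i = false
    have hti : t i = false := by simp [ht, ← hm0, hcr]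
    have hmi : (m i : ℝ) = (m0 : ℝ) := by rw [hm]; simp [hti, hm0]
    have hsh : shiftOf t i = 0 := by simp [shiftOf, hti]
    have hcorner : (2:ℝ) ^ (-k) * ((m i : ℝ) + ε * shiftOf t i) = L * (m0 : ℝ) := by
      rw [← hL, hmi, hsh]; ring
    rw [hcorner]
    push_neg at hcr
    have hml : L * ((m0:ℝ) + 1) = L * (m0:ℝ) + L := by ring
    constructor
    · linarith only [hxi.1, hm0a]
    · linarith only [hxi.2, hcr, hml]
end
end

section
/- Let 𝒟 be a dyadic grid and f a bounded nonnegative measurable function with compact support. Then there exists a sparse family 𝒮 ⊆ 𝒟 such that for all 0 < α < n and all x, I_α^𝒟 f(x) ≤ C(n,α) I_α^𝒮 f(x), where I_α^𝒮 f(x) = Σ_{Q ∈ 𝒮} |Q|^{α/n}(⨍_Q f) χ_Q(x). -/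
open MeasureTheory Set
open scoped ENNReal NNReal

noncomputable section

/-- The union of the members of `S` properly contained in `Q`. -/
def properSubUnion {n : ℕ} (S : Set (Cube n)) (Q : Cube n) : Set (EuclideanSpace ℝ (Fin n)) :=
  ⋃ Q' ∈ {Q' ∈ S | Q'.set ⊂ Q.set}, Cube.set Q'

/-- A sparse family of cubes: for each `Q ∈ S` the union of the members of `S` properly
contained in `Q` has measure at most `|Q|/2`. -/
def IsSparse {n : ℕ} (S : Set (Cube n)) : Prop :=
  ∀ Q ∈ S, volume (properSubUnion S Q) ≤ volume Q.set / 2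

/-- The dyadic Riesz potential `I_α^𝒟 f = Σ_{Q ∈ 𝒟} |Q|^{α/n} (⨍_Q f) χ_Q`. -/
def dyadicRiesz {n : ℕ} (D : Set (Cube n)) (α : ℝ) (f : EuclideanSpace ℝ (Fin n) → ℝ)
    (x : EuclideanSpace ℝ (Fin n)) : ℝ :=
  ∑' Q : D, Set.indicator (Q : Cube n).set
    (fun _ => (volume (Q : Cube n).set).toReal ^ (α / n) * ⨍ y in (Q : Cube n).set, f y) x

namespace Cube

variable {n : ℕ} (Q : Cube n)

lemma set_eq_preimage :
    Q.set = ((MeasurableEquiv.toLp 2 (Fin n → ℝ)).symm) ⁻¹'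
      (Set.univ.pi fun i => Set.Ico (Q.corner i) (Q.corner i + Q.side)) := by
  ext x
  simp [Cube.set, Set.mem_pi, Set.mem_Ico]

lemma measurableSet_set : MeasurableSet Q.set := by
  rw [set_eq_preimage]
  exact (MeasurableEquiv.toLp 2 (Fin n → ℝ)).symm.measurable
    (MeasurableSet.univ_pi fun i => measurableSet_Ico)

lemma volume_set : volume Q.set = ENNReal.ofReal Q.side ^ n := by
  rw [set_eq_preimage,
    (EuclideanSpace.volume_preserving_symm_measurableEquiv_toLp (Fin n)).measure_preimage
      ((MeasurableSet.univ_pi fun i => measurableSet_Ico).nullMeasurableSet),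
    volume_pi_pi]
  simp [Real.volume_Ico]

lemma corner_mem : Q.corner ∈ Q.set := fun i => ⟨le_rfl, by linarith [Q.side_pos]⟩

lemma volume_set_pos : 0 < volume Q.set := by
  rw [volume_set]
  exact pos_iff_ne_zero.2 (pow_ne_zero _ (by simp [ENNReal.ofReal_eq_zero, not_le, Q.side_pos]))

lemma volume_set_lt_top : volume Q.set < ⊤ := by
  rw [volume_set]
  exact ENNReal.pow_lt_top ENNReal.ofReal_lt_top

lemma volume_set_toReal : (volume Q.set).toReal = Q.side ^ n := by
  rw [volume_set, ← ENNReal.ofReal_pow Q.side_pos.le, ENNReal.toReal_ofReal (pow_nonneg Q.side_pos.le n)]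

end Cube

section Grid

variable {n : ℕ} {D : Set (Cube n)} (hD : IsDyadicGrid D)
include hD

/-- Two grid cubes with a common point are nested. -/
lemma grid_nested {Q P : Cube n} (hQ : Q ∈ D) (hP : P ∈ D) {x : EuclideanSpace ℝ (Fin n)}
    (hxQ : x ∈ Q.set) (hxP : x ∈ P.set) : Q.set ⊆ P.set ∨ P.set ⊆ Q.set := by
  rcases hD.2.2.1 Q hQ P hP with h | h | h
  · exact absurd h (by simp [Set.eq_empty_iff_forall_notMem]; exact ⟨x, hxQ, hxP⟩)
  · right; rw [← h]; exact Set.inter_subset_left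
  · left; rw [← h]; exact Set.inter_subset_right

omit hD in
lemma side_le_of_subset (hn : n ≠ 0) {Q P : Cube n} (h : Q.set ⊆ P.set) :
    Q.side ≤ P.side := by
  by_contra hlt
  push_neg at hlt
  have hvol : volume P.set < volume Q.set := by
    rw [Cube.volume_set, Cube.volume_set]
    exact ENNReal.pow_lt_pow_left hn
      ((ENNReal.ofReal_lt_ofReal_iff Q.side_pos).2 hlt)
  exact absurd (measure_mono h) (not_le.2 hvol)

omit hD in
lemma volume_lt_of_side_lt (hn : n ≠ 0) {Q P : Cube n} (h : Q.side < P.side) :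
    volume Q.set < volume P.set := by
  rw [Cube.volume_set, Cube.volume_set]
  exact ENNReal.pow_lt_pow_left hn ((ENNReal.ofReal_lt_ofReal_iff (Q.side_pos.trans h)).2 h)

/-- Grid cubes with equal sides and a common point coincide. -/
lemma grid_eq_of_side_eq {Q P : Cube n} (hQ : Q ∈ D) (hP : P ∈ D) (hside : Q.side = P.side)
    {x : EuclideanSpace ℝ (Fin n)} (hxQ : x ∈ Q.set) (hxP : x ∈ P.set) : Q = P := by
  obtain ⟨k, hk⟩ := hD.2.1 Q hQ
  obtain ⟨R, -, hun⟩ := hD.2.2.2 k x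
  rw [hun Q ⟨hQ, hk, hxQ⟩, hun P ⟨hP, hside ▸ hk, hxP⟩]

lemma grid_subset_of_side_le (hn : n ≠ 0) {Q P : Cube n} (hQ : Q ∈ D) (hP : P ∈ D)
    {x : EuclideanSpace ℝ (Fin n)} (hxQ : x ∈ Q.set) (hxP : x ∈ P.set)
    (hside : Q.side ≤ P.side) : Q.set ⊆ P.set := by
  rcases grid_nested hD hQ hP hxQ hxP with h | h
  · exact h
  · have : Q.side = P.side := le_antisymm hside (side_le_of_subset hn h)
    rw [grid_eq_of_side_eq hD hQ hP this hxQ hxP]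

lemma grid_ssubset_of_side_lt (hn : n ≠ 0) {Q P : Cube n} (hQ : Q ∈ D) (hP : P ∈ D)
    {x : EuclideanSpace ℝ (Fin n)} (hxQ : x ∈ Q.set) (hxP : x ∈ P.set)
    (hside : Q.side < P.side) : Q.set ⊂ P.set := by
  refine ⟨grid_subset_of_side_le hD hn hQ hP hxQ hxP hside.le, fun hPQ => ?_⟩
  exact absurd (measure_mono hPQ) (not_le.2 (volume_lt_of_side_lt hn hside))

lemma side_lt_of_ssubset (hn : n ≠ 0) {Q P : Cube n} (hQ : Q ∈ D) (hP : P ∈ D)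
    (h : Q.set ⊂ P.set) : Q.side < P.side := by
  rcases lt_or_eq_of_le (side_le_of_subset hn h.1) with hlt | heq
  · exact hlt
  · have hx : Q.corner ∈ Q.set := Q.corner_mem
    exact absurd (grid_eq_of_side_eq hD hQ hP heq hx (h.1 hx)) (fun hQP => h.2 (hQP ▸ le_rfl))

/-- The unique grid cube of side `2^k` containing `x`. -/
def gridCube (k : ℤ) (x : EuclideanSpace ℝ (Fin n)) : Cube n :=
  (hD.2.2.2 k x).exists.choose

lemma gridCube_spec (k : ℤ) (x : EuclideanSpace ℝ (Fin n)) :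
    gridCube hD k x ∈ D ∧ (gridCube hD k x).side = 2 ^ k ∧ x ∈ (gridCube hD k x).set :=
  (hD.2.2.2 k x).exists.choose_spec

lemma gridCube_mem (k : ℤ) (x : EuclideanSpace ℝ (Fin n)) : gridCube hD k x ∈ D :=
  (gridCube_spec hD k x).1

lemma gridCube_side (k : ℤ) (x : EuclideanSpace ℝ (Fin n)) : (gridCube hD k x).side = 2 ^ k :=
  (gridCube_spec hD k x).2.1

lemma mem_gridCube (k : ℤ) (x : EuclideanSpace ℝ (Fin n)) : x ∈ (gridCube hD k x).set :=
  (gridCube_spec hD k x).2.2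

lemma gridCube_unique {k : ℤ} {x : EuclideanSpace ℝ (Fin n)} {Q : Cube n} (hQ : Q ∈ D)
    (hside : Q.side = 2 ^ k) (hx : x ∈ Q.set) : Q = gridCube hD k x :=
  grid_eq_of_side_eq hD hQ (gridCube_mem hD k x) (hside.trans (gridCube_side hD k x).symm)
    hx (mem_gridCube hD k x)

lemma gridCube_mono (hn : n ≠ 0) {j k : ℤ} (h : j ≤ k) (x : EuclideanSpace ℝ (Fin n)) :
    (gridCube hD j x).set ⊆ (gridCube hD k x).set := by
  apply grid_subset_of_side_le hD hn (gridCube_mem hD j x) (gridCube_mem hD k x)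
    (mem_gridCube hD j x) (mem_gridCube hD k x)
  rw [gridCube_side, gridCube_side]
  exact zpow_le_zpow_right₀ one_le_two h

end Grid

section Avg

variable {n : ℕ} {f : EuclideanSpace ℝ (Fin n) → ℝ}

lemma integrable_of_bdd_compact (hf : Measurable f) (hnn : ∀ x, 0 ≤ f x)
    (hbd : ∃ M : ℝ, ∀ x, f x ≤ M) (hsupp : HasCompactSupport f) : Integrable f := by
  obtain ⟨M, hM⟩ := hbd
  have hM0 : 0 ≤ M := le_trans (hnn 0) (hM 0)
  refine Integrable.mono' (g := (tsupport f).indicator fun _ => M) ?_ hf.aestronglyMeasurable ?_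
  · exact (integrable_indicator_iff (isClosed_tsupport f).measurableSet).2
      (integrableOn_const hsupp.isCompact.measure_lt_top.ne)
  · refine Filter.Eventually.of_forall fun y => ?_
    rw [Real.norm_of_nonneg (hnn y)]
    by_cases hy : y ∈ tsupport f
    · simp [Set.indicator_of_mem hy, hM y]
    · simp [Set.indicator_of_notMem hy, image_eq_zero_of_notMem_tsupport hy]

lemma avg_nonneg (hnn : ∀ x, 0 ≤ f x) (s : Set (EuclideanSpace ℝ (Fin n))) :
    0 ≤ ⨍ y in s, f y := by
  rw [setAverage_eq]
  exact smul_nonneg (by positivity) (integral_nonneg hnn)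

lemma integral_eq_avg_mul (Q : Cube n) :
    ∫ y in Q.set, f y = (⨍ y in Q.set, f y) * (volume Q.set).toReal := by
  rw [setAverage_eq, smul_eq_mul, measureReal_def]
  have h0 : (volume Q.set).toReal ≠ 0 :=
    ENNReal.toReal_ne_zero.2 ⟨Q.volume_set_pos.ne', Q.volume_set_lt_top.ne⟩
  field_simp

lemma setIntegral_mono_subset (hint : Integrable f) (hnn : ∀ x, 0 ≤ f x)
    {s t : Set (EuclideanSpace ℝ (Fin n))} (h : s ⊆ t) :
    ∫ y in s, f y ≤ ∫ y in t, f y :=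
  setIntegral_mono_set hint.integrableOn (Filter.Eventually.of_forall hnn) (h.eventuallyLE)

lemma avg_le_integral_div (hint : Integrable f) (hnn : ∀ x, 0 ≤ f x) (Q : Cube n) :
    ⨍ y in Q.set, f y ≤ (∫ y, f y) / (volume Q.set).toReal := by
  rw [setAverage_eq, smul_eq_mul, div_eq_inv_mul]
  have h1 : ∫ y in Q.set, f y ≤ ∫ y, f y := by
    simpa using setIntegral_mono_subset hint hnn (Set.subset_univ Q.set)
  exact mul_le_mul_of_nonneg_left h1 (by positivity)

lemma lintegral_ofReal_set (hint : Integrable f) (hnn : ∀ x, 0 ≤ f x)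
    (s : Set (EuclideanSpace ℝ (Fin n))) :
    ∫⁻ y in s, ENNReal.ofReal (f y) = ENNReal.ofReal (∫ y in s, f y) :=
  (ofReal_integral_eq_lintegral_ofReal hint.integrableOn
    (Filter.Eventually.of_forall hnn)).symm

end Avg

section Cover

variable {n : ℕ} {D : Set (Cube n)} (hD : IsDyadicGrid D)
include hD

/-- Vitali-type bound for a finite nested-or-disjoint family of cubes. -/
lemma finset_cover (g : EuclideanSpace ℝ (Fin n) → ℝ≥0∞) (c : ℝ≥0∞)
    (F : Finset (Cube n)) (hFD : ∀ R ∈ F, R ∈ D)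
    (hvol : ∀ R ∈ F, c * volume R.set ≤ ∫⁻ y in R.set, g y) :
    c * volume (⋃ R ∈ F, Cube.set R) ≤ ∫⁻ y in (⋃ R ∈ F, Cube.set R), g y := by
  classical
  induction F using Finset.strongInduction with
  | _ F ih =>
    rcases F.eq_empty_or_nonempty with rfl | hne
    · simp
    obtain ⟨R₀, hR₀F, hmax⟩ :=
      Set.Finite.exists_maximalFor Cube.set (↑F : Set (Cube n)) F.finite_toSet
        (by exact_mod_cast hne)
    set G : Finset (Cube n) := F.filter (fun R => R.set ∩ R₀.set = ∅) with hG
    have hR₀G : R₀ ∉ G := by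
      simp only [hG, Finset.mem_filter]
      rintro ⟨-, h⟩
      exact absurd h (by rw [Set.inter_self]; exact Set.nonempty_iff_ne_empty.1 ⟨_, R₀.corner_mem⟩)
    have hGF : G ⊂ F := Finset.ssubset_iff_of_subset (Finset.filter_subset _ _) |>.2
      ⟨R₀, hR₀F, hR₀G⟩
    have hUG_meas : MeasurableSet (⋃ R ∈ G, Cube.set R) :=
      G.measurableSet_biUnion fun R _ => R.measurableSet_set
    have hsplit : (⋃ R ∈ F, Cube.set R) = R₀.set ∪ ⋃ R ∈ G, Cube.set R := by
      apply Set.Subset.antisymm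
      · intro y hy
        simp only [Set.mem_iUnion] at hy
        obtain ⟨R, hRF, hyR⟩ := hy
        by_cases hcap : R.set ∩ R₀.set = ∅
        · exact Or.inr (Set.mem_iUnion₂.2 ⟨R, by simp [hG, Finset.mem_filter, hRF, hcap], hyR⟩)
        · left
          obtain ⟨z, hz⟩ := Set.nonempty_iff_ne_empty.2 hcap
          rcases grid_nested hD (hFD R hRF) (hFD R₀ hR₀F) hz.1 hz.2 with h | h
          · exact h hyR
          · exact hmax hRF h hyR
      · refine Set.union_subset ?_ ?_
        · exact Set.subset_iUnion₂ (s := fun R (_ : R ∈ F) => Cube.set R) R₀ hR₀F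
        · exact Set.iUnion₂_mono' fun R hRG => ⟨R, Finset.mem_of_mem_filter R hRG, le_rfl⟩
    have hdisj : Disjoint R₀.set (⋃ R ∈ G, Cube.set R) := by
      rw [Set.disjoint_iff_inter_eq_empty, Set.inter_iUnion₂, Set.eq_empty_iff_forall_notMem]
      intro y hy
      simp only [Set.mem_iUnion] at hy
      obtain ⟨R, hRG, hyR⟩ := hy
      have : R.set ∩ R₀.set = ∅ := (Finset.mem_filter.1 hRG).2
      exact (Set.eq_empty_iff_forall_notMem.1 this y) ⟨hyR.2, hyR.1⟩
    rw [hsplit]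
    calc c * volume (R₀.set ∪ ⋃ R ∈ G, Cube.set R)
        ≤ c * (volume R₀.set + volume (⋃ R ∈ G, Cube.set R)) := by
          exact mul_le_mul_right (measure_union_le _ _) c
      _ = c * volume R₀.set + c * volume (⋃ R ∈ G, Cube.set R) := by ring
      _ ≤ (∫⁻ y in R₀.set, g y) + ∫⁻ y in (⋃ R ∈ G, Cube.set R), g y := by
          gcongr
          · exact hvol R₀ hR₀F
          · exact ih G hGF (fun R hR => hFD R (Finset.mem_of_mem_filter R hR))
              (fun R hR => hvol R (Finset.mem_of_mem_filter R hR))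
      _ = ∫⁻ y in R₀.set ∪ ⋃ R ∈ G, Cube.set R, g y :=
          (lintegral_union hUG_meas hdisj).symm

end Cover

/-- The Calderón–Zygmund stopping family. -/
def czFamily {n : ℕ} (D : Set (Cube n)) (f : EuclideanSpace ℝ (Fin n) → ℝ) : Set (Cube n) :=
  {Q | Q ∈ D ∧ ∃ m : ℤ, ((2:ℝ)^(n+1))^m < ⨍ y in Q.set, f y ∧
      ∀ R ∈ D, Q.set ⊂ R.set → (⨍ y in R.set, f y) ≤ ((2:ℝ)^(n+1))^m}

section Sparse

variable {n : ℕ} {D : Set (Cube n)} {f : EuclideanSpace ℝ (Fin n) → ℝ}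

lemma czFamily_subset : czFamily D f ⊆ D := fun _ h => h.1

lemma one_lt_base (n : ℕ) : (1:ℝ) < (2:ℝ)^(n+1) := one_lt_pow₀ one_lt_two (Nat.succ_ne_zero n)

lemma czFamily_sparse (hD : IsDyadicGrid D) (hn : n ≠ 0) (hint : Integrable f)
    (hnn : ∀ x, 0 ≤ f x) : IsSparse (czFamily D f) := by
  classical
  rintro Q ⟨hQD, m, hm1, hm2⟩
  set a : ℝ := (2:ℝ)^(n+1) with ha_def
  have ha1 : (1:ℝ) < a := one_lt_base n
  have ha0 : (0:ℝ) < a := by positivity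
  set c0 : ℝ := 2^n * a^m with hc0_def
  have hc0 : 0 < c0 := by positivity
  set lam : ℝ := a^(m+1) with hlam_def
  have hlam0 : 0 < lam := by positivity
  have hlam2 : lam = 2 * c0 := by
    rw [hlam_def, zpow_add_one₀ (ne_of_gt ha0), hc0_def, ha_def, pow_succ]
    ring
  set g : EuclideanSpace ℝ (Fin n) → ℝ≥0∞ := fun y => ENNReal.ofReal (f y) with hg_def
  -- Step A : the integral of f over Q is controlled
  have stepA : ∫ y in Q.set, f y ≤ c0 * (volume Q.set).toReal := by
    obtain ⟨k, hk⟩ := hD.2.1 Q hQD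
    set P := gridCube hD (k+1) Q.corner with hP_def
    have hQP : Q.set ⊂ P.set := by
      refine grid_ssubset_of_side_lt hD hn hQD (gridCube_mem hD _ _) Q.corner_mem
        (mem_gridCube hD _ _) ?_
      rw [hk, gridCube_side]
      exact zpow_lt_zpow_right₀ one_lt_two (lt_add_one k)
    have hPavg : ⨍ y in P.set, f y ≤ a^m := hm2 P (gridCube_mem hD _ _) hQP
    have hPvol : (volume P.set).toReal = 2^n * (volume Q.set).toReal := by
      rw [Cube.volume_set_toReal, Cube.volume_set_toReal, hP_def, gridCube_side, hk,
        zpow_add_one₀ (two_ne_zero), mul_pow]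
      ring
    calc ∫ y in Q.set, f y ≤ ∫ y in P.set, f y := setIntegral_mono_subset hint hnn hQP.1
      _ = (⨍ y in P.set, f y) * (volume P.set).toReal := integral_eq_avg_mul P
      _ ≤ a^m * (volume P.set).toReal :=
          mul_le_mul_of_nonneg_right hPavg ENNReal.toReal_nonneg
      _ = c0 * (volume Q.set).toReal := by rw [hPvol, hc0_def]; ring
  -- Step B : cubes of the family strictly inside Q carry large averages
  have key : ∀ Q' ∈ czFamily D f, Q'.set ⊂ Q.set →
      ENNReal.ofReal lam * volume Q'.set ≤ ∫⁻ y in Q'.set, g y := by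
    rintro Q' ⟨hQ'D, m', hm1', hm2'⟩ hss
    have hmm : m + 1 ≤ m' := by
      by_contra hcon
      push_neg at hcon
      have h1 : ⨍ y in Q.set, f y ≤ a^m' := hm2' Q hQD hss
      have h2 : a^m' ≤ a^m := zpow_le_zpow_right₀ ha1.le (by omega)
      linarith
    have havg : lam ≤ ⨍ y in Q'.set, f y :=
      le_of_lt (lt_of_le_of_lt (zpow_le_zpow_right₀ ha1.le hmm) hm1')
    rw [show ENNReal.ofReal lam * volume Q'.set
          = ENNReal.ofReal (lam * (volume Q'.set).toReal) by
        rw [ENNReal.ofReal_mul hlam0.le, ENNReal.ofReal_toReal Q'.volume_set_lt_top.ne],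
      hg_def, lintegral_ofReal_set hint hnn]
    apply ENNReal.ofReal_le_ofReal
    rw [integral_eq_avg_mul]
    exact mul_le_mul_of_nonneg_right havg ENNReal.toReal_nonneg
  -- the covering family
  set Fam : Set (Cube n) := {R | R ∈ D ∧ R.set ⊆ Q.set ∧
      ENNReal.ofReal lam * volume R.set ≤ ∫⁻ y in R.set, g y} with hFam_def
  have hsub : properSubUnion (czFamily D f) Q ⊆ ⋃ R ∈ Fam, Cube.set R := by
    intro y hy
    simp only [properSubUnion, Set.mem_iUnion, Set.mem_setOf_eq] at hy
    obtain ⟨Q', ⟨hQ'S, hQ'ss⟩, hyQ'⟩ := hy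
    exact Set.mem_iUnion₂.2 ⟨Q', ⟨hQ'S.1, hQ'ss.1, key Q' hQ'S hQ'ss⟩, hyQ'⟩
  have hcount : Fam.Countable := hD.1.mono (fun R hR => hR.1)
  -- Step C : the covering bound
  have hU : ENNReal.ofReal lam * volume (⋃ R ∈ Fam, Cube.set R) ≤ ∫⁻ y in Q.set, g y := by
    rcases Fam.eq_empty_or_nonempty with h | h
    · simp [h]
    obtain ⟨e, he⟩ := hcount.exists_eq_range h
    set W : ℕ → Set (EuclideanSpace ℝ (Fin n)) :=
      fun N => ⋃ R ∈ (Finset.range N).image e, Cube.set R with hW_def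
    have hUW : (⋃ R ∈ Fam, Cube.set R) = ⋃ N, W N := by
      ext y
      simp only [Set.mem_iUnion, hW_def]
      constructor
      · rintro ⟨R, hRF, hyR⟩
        have : R ∈ Set.range e := he ▸ hRF
        obtain ⟨i, rfl⟩ := this
        exact ⟨i + 1, e i, Finset.mem_image_of_mem e (Finset.mem_range.2 (lt_add_one i)), hyR⟩
      · rintro ⟨N, R, hR, hyR⟩
        obtain ⟨i, -, rfl⟩ := Finset.mem_image.1 hR
        exact ⟨e i, he ▸ Set.mem_range_self i, hyR⟩
    have hWmono : Monotone W := by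
      intro N M hNM
      exact Set.iUnion₂_mono' fun R hR =>
        ⟨R, Finset.image_subset_image (Finset.range_subset_range.2 hNM) hR, le_rfl⟩
    have hWQ : ∀ N, W N ⊆ Q.set := by
      intro N y hy
      simp only [hW_def, Set.mem_iUnion] at hy
      obtain ⟨R, hR, hyR⟩ := hy
      obtain ⟨i, -, rfl⟩ := Finset.mem_image.1 hR
      have : e i ∈ Fam := he ▸ Set.mem_range_self i
      exact this.2.1 hyR
    rw [hUW, Directed.measure_iUnion (hWmono.directed_le), ENNReal.mul_iSup]
    refine iSup_le fun N => ?_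
    have hFD : ∀ R ∈ (Finset.range N).image e, R ∈ D := by
      intro R hR
      obtain ⟨i, -, rfl⟩ := Finset.mem_image.1 hR
      exact (he ▸ Set.mem_range_self i : e i ∈ Fam).1
    have hvol : ∀ R ∈ (Finset.range N).image e,
        ENNReal.ofReal lam * volume R.set ≤ ∫⁻ y in R.set, g y := by
      intro R hR
      obtain ⟨i, -, rfl⟩ := Finset.mem_image.1 hR
      exact (he ▸ Set.mem_range_self i : e i ∈ Fam).2.2
    calc ENNReal.ofReal lam * volume (W N)
        ≤ ∫⁻ y in W N, g y := finset_cover hD g _ _ hFD hvol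
      _ ≤ ∫⁻ y in Q.set, g y := lintegral_mono' (Measure.restrict_mono (hWQ N) le_rfl) le_rfl
  -- Step D : conclusion
  have hfinal : ENNReal.ofReal lam * volume (properSubUnion (czFamily D f) Q)
      ≤ ENNReal.ofReal c0 * volume Q.set := by
    calc ENNReal.ofReal lam * volume (properSubUnion (czFamily D f) Q)
        ≤ ENNReal.ofReal lam * volume (⋃ R ∈ Fam, Cube.set R) :=
          mul_le_mul_right (measure_mono hsub) _
      _ ≤ ∫⁻ y in Q.set, g y := hU
      _ = ENNReal.ofReal (∫ y in Q.set, f y) := lintegral_ofReal_set hint hnn Q.set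
      _ ≤ ENNReal.ofReal (c0 * (volume Q.set).toReal) := ENNReal.ofReal_le_ofReal stepA
      _ = ENNReal.ofReal c0 * volume Q.set := by
          rw [ENNReal.ofReal_mul hc0.le, ENNReal.ofReal_toReal Q.volume_set_lt_top.ne]
  have hc0E0 : ENNReal.ofReal c0 ≠ 0 := (ENNReal.ofReal_pos.2 hc0).ne'
  have h2 : 2 * volume (properSubUnion (czFamily D f) Q) ≤ volume Q.set := by
    have hO2 : ENNReal.ofReal lam = ENNReal.ofReal c0 * 2 := by
      rw [hlam2, ENNReal.ofReal_mul (by norm_num : (0:ℝ) ≤ 2)]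
      norm_num [mul_comm]
    rw [← ENNReal.mul_le_mul_iff_right hc0E0 ENNReal.ofReal_ne_top]
    calc ENNReal.ofReal c0 * (2 * volume (properSubUnion (czFamily D f) Q))
        = ENNReal.ofReal lam * volume (properSubUnion (czFamily D f) Q) := by
          rw [hO2]; ring
      _ ≤ ENNReal.ofReal c0 * volume Q.set := hfinal
  rw [ENNReal.le_div_iff_mul_le (Or.inl two_ne_zero) (Or.inl ENNReal.ofNat_ne_top), mul_comm]
  exact h2

end Sparse

section Dominate

variable {n : ℕ} {D : Set (Cube n)} {f : EuclideanSpace ℝ (Fin n) → ℝ}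

/-- One summand of the dyadic Riesz potential. -/
def rieszTerm (α : ℝ) (f : EuclideanSpace ℝ (Fin n) → ℝ) (x : EuclideanSpace ℝ (Fin n))
    (Q : Cube n) : ℝ :=
  Set.indicator Q.set (fun _ => (volume Q.set).toReal ^ (α / n) * ⨍ y in Q.set, f y) x

lemma dyadicRiesz_eq (S : Set (Cube n)) (α : ℝ) (x : EuclideanSpace ℝ (Fin n)) :
    dyadicRiesz S α f x = ∑' Q : S, rieszTerm α f x ↑Q := rfl

lemma rieszTerm_nonneg (hnn : ∀ x, 0 ≤ f x) (α : ℝ) (x : EuclideanSpace ℝ (Fin n))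
    (Q : Cube n) : 0 ≤ rieszTerm α f x Q := by
  unfold rieszTerm
  apply Set.indicator_nonneg
  intro y _
  exact mul_nonneg (Real.rpow_nonneg ENNReal.toReal_nonneg _) (avg_nonneg hnn _)

lemma vol_rpow (hn : n ≠ 0) (α : ℝ) (Q : Cube n) :
    (volume Q.set).toReal ^ (α / n) = Q.side ^ α := by
  rw [Cube.volume_set_toReal, ← Real.rpow_natCast Q.side n, ← Real.rpow_mul Q.side_pos.le]
  congr 1
  field_simp

lemma rieszTerm_of_mem (hn : n ≠ 0) {α : ℝ} {x : EuclideanSpace ℝ (Fin n)} {Q : Cube n}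
    (hx : x ∈ Q.set) : rieszTerm α f x Q = Q.side ^ α * ⨍ y in Q.set, f y := by
  rw [rieszTerm, Set.indicator_of_mem hx, vol_rpow hn]

lemma rieszTerm_ne_zero (hn : n ≠ 0) (hnn : ∀ x, 0 ≤ f x) {α : ℝ}
    {x : EuclideanSpace ℝ (Fin n)} {Q : Cube n} (h : rieszTerm α f x Q ≠ 0) :
    x ∈ Q.set ∧ 0 < ⨍ y in Q.set, f y := by
  by_cases hx : x ∈ Q.set
  · refine ⟨hx, ?_⟩
    rcases lt_or_eq_of_le (avg_nonneg hnn Q.set) with h0 | h0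
    · exact h0
    · exact absurd (by rw [rieszTerm_of_mem hn hx, ← h0, mul_zero]) h
  · exact absurd (Set.indicator_of_notMem hx _) h

lemma zpow_rpow (j : ℤ) (α : ℝ) : ((2:ℝ)^j)^α = (2:ℝ)^((j:ℝ)*α) := by
  rw [← Real.rpow_intCast 2 j, ← Real.rpow_mul (by norm_num : (0:ℝ) ≤ 2)]

/-- Geometric sum of scales below a top scale. -/
lemma geom_sum_bound (α : ℝ) (hα : 0 < α) (L : ℤ) (B : ℝ) (hB : 0 ≤ B) :
    ∑' (j : ℤ), (if j ≤ L then ENNReal.ofReal (((2:ℝ)^j)^α * B) else 0)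
      = ENNReal.ofReal ((1 - (2:ℝ)^(-α))⁻¹ * (((2:ℝ)^L)^α * B)) := by
  have hq1 : (2:ℝ)^(-α) < 1 :=
    Real.rpow_lt_one_of_one_lt_of_neg one_lt_two (neg_lt_zero.2 hα)
  have hq0 : (0:ℝ) ≤ (2:ℝ)^(-α) := Real.rpow_nonneg (by norm_num) _
  set F : ℤ → ℝ≥0∞ := fun j => if j ≤ L then ENNReal.ofReal (((2:ℝ)^j)^α * B) else 0 with hF
  have hinj : Function.Injective (fun k : ℕ => L - (k:ℤ)) := by
    intro k1 k2 h
    simp only at h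
    exact_mod_cast sub_right_inj.mp h
  have hsupp : Function.support F ⊆ Set.range (fun k : ℕ => L - (k:ℤ)) := by
    intro j hj
    have hjL : j ≤ L := by
      by_contra hcon
      exact hj (by simp [hF, hcon])
    exact ⟨(L - j).toNat, by simp [Int.toNat_of_nonneg (sub_nonneg.2 hjL)]⟩
  have hterm : ∀ k : ℕ, F (L - k) =
      ENNReal.ofReal (((2:ℝ)^L)^α * B) * (ENNReal.ofReal ((2:ℝ)^(-α)))^k := by
    intro k
    have h2 : ((2:ℝ)^(L - (k:ℤ)))^α = ((2:ℝ)^L)^α * ((2:ℝ)^(-α))^k := by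
      rw [zpow_rpow, zpow_rpow, ← Real.rpow_natCast ((2:ℝ)^(-α)) k,
        ← Real.rpow_mul (by norm_num : (0:ℝ) ≤ 2), ← Real.rpow_add (by norm_num : (0:ℝ) < 2)]
      congr 1
      push_cast
      ring
    simp only [hF]
    rw [if_pos (by omega : L - (k:ℤ) ≤ L), h2, mul_right_comm,
      ENNReal.ofReal_mul (by positivity), ENNReal.ofReal_pow hq0]
  calc ∑' (j : ℤ), F j = ∑' (k : ℕ), F (L - k) := (Function.Injective.tsum_eq hinj hsupp).symm
    _ = ∑' (k : ℕ), ENNReal.ofReal (((2:ℝ)^L)^α * B) * (ENNReal.ofReal ((2:ℝ)^(-α)))^k :=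
        tsum_congr hterm
    _ = ENNReal.ofReal (((2:ℝ)^L)^α * B) * (1 - ENNReal.ofReal ((2:ℝ)^(-α)))⁻¹ := by
        rw [ENNReal.tsum_mul_left, ENNReal.tsum_geometric]
    _ = ENNReal.ofReal ((1 - (2:ℝ)^(-α))⁻¹ * (((2:ℝ)^L)^α * B)) := by
        rw [show (1:ℝ≥0∞) - ENNReal.ofReal ((2:ℝ)^(-α))
              = ENNReal.ofReal (1 - (2:ℝ)^(-α)) by
            rw [← ENNReal.ofReal_one, ENNReal.ofReal_sub _ hq0, ENNReal.ofReal_one],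
          ← ENNReal.ofReal_inv_of_pos (by linarith), ← ENNReal.ofReal_mul (by positivity)]
        rw [mul_comm]

/-- Every cube of the grid carrying a positive average has a stopping parent in the
Calderón–Zygmund family. -/
lemma exists_parent (hD : IsDyadicGrid D) (hn : n ≠ 0) (hint : Integrable f)
    (hnn : ∀ x, 0 ≤ f x) {x : EuclideanSpace ℝ (Fin n)} {Q : Cube n} (hQ : Q ∈ D)
    (hx : x ∈ Q.set) (havg : 0 < ⨍ y in Q.set, f y) :
    ∃ (P : Cube n) (j : ℤ), P ∈ czFamily D f ∧ x ∈ P.set ∧ Q = gridCube hD j x ∧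
      Q.side = 2^j ∧ Q.set ⊆ P.set ∧
      (⨍ y in Q.set, f y) ≤ (2:ℝ)^(n+1) * ⨍ y in P.set, f y := by
  set a : ℝ := (2:ℝ)^(n+1) with ha_def
  have ha1 : (1:ℝ) < a := one_lt_base n
  obtain ⟨j, hj⟩ := hD.2.1 Q hQ
  have hQj : Q = gridCube hD j x := gridCube_unique hD hQ hj hx
  obtain ⟨m, hm⟩ := exists_mem_Ioc_zpow havg ha1
  set I : ℝ := ∫ y, f y with hI_def
  have hI0 : 0 ≤ I := integral_nonneg hnn
  have ham : (0:ℝ) < a^m := by positivity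
  -- the set of scales with large average is bounded above
  have hbdd : ∃ b : ℤ, ∀ z : ℤ, (a^m < ⨍ y in (gridCube hD z x).set, f y) → z ≤ b := by
    obtain ⟨N, hN⟩ := pow_unbounded_of_one_lt (I / a^m) (one_lt_two (α := ℝ))
    refine ⟨(N:ℤ), fun z hz => ?_⟩
    by_contra hcon
    push_neg at hcon
    set R := gridCube hD z x with hR_def
    have hside : ((2:ℝ)^N : ℝ) ≤ R.side := by
      rw [hR_def, gridCube_side, ← zpow_natCast (2:ℝ) N]
      exact zpow_le_zpow_right₀ one_le_two (by omega)
    have h1le : (1:ℝ) ≤ R.side := le_trans (one_le_pow₀ one_le_two) hside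
    have hvol : ((2:ℝ)^N : ℝ) ≤ R.side ^ n := le_trans hside (le_self_pow₀ h1le hn)
    have havgR : ⨍ y in R.set, f y ≤ I / 2^N := by
      calc ⨍ y in R.set, f y ≤ I / (volume R.set).toReal := avg_le_integral_div hint hnn R
        _ = I / R.side ^ n := by rw [Cube.volume_set_toReal]
        _ ≤ I / 2^N := div_le_div_of_nonneg_left hI0 (by positivity) hvol
    have : I / 2^N < a^m := by
      rw [div_lt_iff₀ (by positivity)]
      rw [div_lt_iff₀ ham] at hN
      linarith [hN]
    linarith [hz, havgR]
  obtain ⟨J, hJ1, hJ2⟩ := Int.exists_greatest_of_bdd hbdd ⟨j, by rw [← hQj]; exact hm.1⟩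
  have hjJ : j ≤ J := hJ2 j (by rw [← hQj]; exact hm.1)
  have hQsub : Q.set ⊆ (gridCube hD J x).set := by
    rw [hQj]
    exact gridCube_mono hD hn hjJ x
  refine ⟨gridCube hD J x, j, ⟨gridCube_mem hD J x, m, hJ1, ?_⟩, mem_gridCube hD J x,
    hQj, hj, hQsub, ?_⟩
  · intro R hR hss
    obtain ⟨k, hk⟩ := hD.2.1 R hR
    have hxR : x ∈ R.set := hss.1 (mem_gridCube hD J x)
    have hRg : R = gridCube hD k x := gridCube_unique hD hR hk hxR
    by_contra hcon
    push_neg at hcon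
    have hkJ : k ≤ J := hJ2 k (by rw [← hRg]; exact hcon)
    have : R.set ⊆ (gridCube hD J x).set := by
      rw [hRg]
      exact gridCube_mono hD hn hkJ x
    exact hss.2 this
  · calc ⨍ y in Q.set, f y ≤ a^(m+1) := hm.2
      _ = a * a^m := by rw [zpow_add_one₀ (by positivity : a ≠ 0)]; ring
      _ ≤ a * ⨍ y in (gridCube hD J x).set, f y :=
          mul_le_mul_of_nonneg_left hJ1.le (by positivity)

end Dominate

section Dominate2

variable {n : ℕ} {D : Set (Cube n)} {f : EuclideanSpace ℝ (Fin n) → ℝ}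

lemma dominate (hD : IsDyadicGrid D) (hn : n ≠ 0) (hint : Integrable f) (hnn : ∀ x, 0 ≤ f x)
    (α : ℝ) (hα : 0 < α) (x : EuclideanSpace ℝ (Fin n)) :
    ∑' (Q : D), ENNReal.ofReal (rieszTerm α f x ↑Q)
      ≤ ENNReal.ofReal ((2:ℝ)^(n+1) * (1 - (2:ℝ)^(-α))⁻¹) *
        ∑' (P : czFamily D f), ENNReal.ofReal (rieszTerm α f x ↑P) := by
  classical
  set a : ℝ := (2:ℝ)^(n+1) with ha_def
  have ha1 : (1:ℝ) < a := one_lt_base n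
  have ha0 : (0:ℝ) < a := by positivity
  have hq1 : (2:ℝ)^(-α) < 1 :=
    Real.rpow_lt_one_of_one_lt_of_neg one_lt_two (neg_lt_zero.2 hα)
  have hq0 : (0:ℝ) ≤ (2:ℝ)^(-α) := Real.rpow_nonneg (by norm_num) _
  set S : Set (Cube n) := czFamily D f with hS_def
  set tE : Cube n → ℝ≥0∞ := fun Q => ENNReal.ofReal (rieszTerm α f x Q) with htE
  set w : ↥S × ℤ → ℝ≥0∞ := fun p =>
      if x ∈ (p.1 : Cube n).set ∧ (2:ℝ)^p.2 ≤ (p.1 : Cube n).side then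
        ENNReal.ofReal (((2:ℝ)^p.2)^α * (a * ⨍ y in (p.1 : Cube n).set, f y)) else 0 with hw
  set supp : Set (↥D) := {Q | tE ↑Q ≠ 0} with hsupp_def
  have hstep1 : ∑' (Q : ↥D), tE ↑Q = ∑' (c : ↥supp), tE ↑↑c :=
    (Function.Injective.tsum_eq Subtype.val_injective
      (fun Q hQ => ⟨⟨Q, hQ⟩, rfl⟩)).symm
  have hmain : ∀ c : ↥supp, ∃ p : ↥S × ℤ,
      ((c : ↥D) : Cube n) = gridCube hD p.2 x ∧ tE ↑↑c ≤ w p := by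
    intro c
    have hne' : rieszTerm α f x ↑↑c ≠ 0 := by
      intro h0
      exact c.2 (by rw [htE]; simp [h0])
    obtain ⟨hxQ, havg⟩ := rieszTerm_ne_zero hn hnn hne'
    obtain ⟨P, j, hPS, hxP, hQg, hside, hsub, havgle⟩ :=
      exists_parent hD hn hint hnn (c : ↥D).2 hxQ havg
    refine ⟨⟨⟨P, hPS⟩, j⟩, hQg, ?_⟩
    have hcond : x ∈ P.set ∧ (2:ℝ)^j ≤ P.side :=
      ⟨hxP, by rw [← hside]; exact side_le_of_subset hn hsub⟩
    rw [hw]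
    dsimp only
    rw [if_pos hcond, htE]
    dsimp only
    rw [rieszTerm_of_mem hn hxQ, hside]
    exact ENNReal.ofReal_le_ofReal
      (mul_le_mul_of_nonneg_left havgle (Real.rpow_nonneg (by positivity) α))
  set e : ↥supp → ↥S × ℤ := fun c => (hmain c).choose with he_def
  have he1 : ∀ c : ↥supp, ((c : ↥D) : Cube n) = gridCube hD (e c).2 x :=
    fun c => (hmain c).choose_spec.1
  have he2 : ∀ c : ↥supp, tE ↑↑c ≤ w (e c) := fun c => (hmain c).choose_spec.2
  have heinj : Function.Injective e := by
    intro c1 c2 h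
    have : ((c1 : ↥D) : Cube n) = ((c2 : ↥D) : Cube n) := by rw [he1 c1, he1 c2, h]
    exact Subtype.ext (Subtype.ext this)
  have hstep2 : ∑' (c : ↥supp), tE ↑↑c ≤ ∑' (p : ↥S × ℤ), w p :=
    ENNReal.summable.tsum_le_tsum_of_inj e heinj (fun p _ => zero_le) he2 ENNReal.summable
  have hinner : ∀ P : ↥S, ∑' (j : ℤ), w (P, j)
      ≤ ENNReal.ofReal (a * (1 - (2:ℝ)^(-α))⁻¹) * tE ↑P := by
    intro P
    by_cases hxP : x ∈ (P : Cube n).set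
    · obtain ⟨L, hL⟩ := hD.2.1 ↑P (czFamily_subset P.2)
      have havgP : (0:ℝ) ≤ ⨍ y in (P : Cube n).set, f y := avg_nonneg hnn _
      have hwen : ∀ j : ℤ, w (P, j) = if j ≤ L then
          ENNReal.ofReal (((2:ℝ)^j)^α * (a * ⨍ y in (P : Cube n).set, f y)) else 0 := by
        intro j
        have hcond : (x ∈ (P:Cube n).set ∧ (2:ℝ)^j ≤ (P:Cube n).side) ↔ j ≤ L := by
          rw [hL]
          simp [hxP, zpow_le_zpow_iff_right₀ (one_lt_two (α := ℝ))]
        rw [hw]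
        dsimp only
        by_cases hj : j ≤ L
        · rw [if_pos (hcond.2 hj), if_pos hj]
        · rw [if_neg (fun hc => hj (hcond.1 hc)), if_neg hj]
      refine le_of_eq ?_
      rw [tsum_congr hwen, geom_sum_bound α hα L _ (mul_nonneg ha0.le havgP), htE]
      dsimp only
      rw [rieszTerm_of_mem hn hxP, hL,
        ← ENNReal.ofReal_mul (mul_nonneg ha0.le (inv_nonneg.2 (by linarith)))]
      congr 1
      ring
    · have hzero : ∀ j : ℤ, w (P,j) = 0 := by
        intro j
        rw [hw]
        dsimp only
        rw [if_neg (fun hc => hxP hc.1)]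
      rw [tsum_congr hzero]
      simp
  calc ∑' (Q : ↥D), tE ↑Q = ∑' (c : ↥supp), tE ↑↑c := hstep1
    _ ≤ ∑' (p : ↥S × ℤ), w p := hstep2
    _ = ∑' (P : ↥S), ∑' (j : ℤ), w (P, j) := by
        have := ENNReal.tsum_prod (f := fun (P : ↥S) (j : ℤ) => w (P, j))
        simpa using this
    _ ≤ ∑' (P : ↥S), ENNReal.ofReal (a * (1 - (2:ℝ)^(-α))⁻¹) * tE ↑P :=
        ENNReal.tsum_le_tsum hinner
    _ = ENNReal.ofReal (a * (1 - (2:ℝ)^(-α))⁻¹) * ∑' (P : ↥S), tE ↑P :=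
        ENNReal.tsum_mul_left

end Dominate2

/-- For a bounded nonnegative function with compact support there is a sparse subfamily
`𝒮 ⊆ 𝒟` with `I_α^𝒟 f ≤ C(n,α) I_α^𝒮 f` pointwise, for all `0 < α < n`. -/
theorem statement4 (n : ℕ) (D : Set (Cube n)) (hD : IsDyadicGrid D)
    (f : EuclideanSpace ℝ (Fin n) → ℝ) (hf : Measurable f) (hnn : ∀ x, 0 ≤ f x)
    (hbd : ∃ M : ℝ, ∀ x, f x ≤ M) (hsupp : HasCompactSupport f) :
    ∃ S : Set (Cube n), S ⊆ D ∧ IsSparse S ∧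
      ∀ α : ℝ, 0 < α → α < n → ∃ C : ℝ, 0 < C ∧
        ∀ x, dyadicRiesz D α f x ≤ C * dyadicRiesz S α f x := by
  rcases Nat.eq_zero_or_pos n with hn0 | hnpos
  · refine ⟨∅, Set.empty_subset _, fun Q hQ => absurd hQ (Set.notMem_empty Q), ?_⟩
    intro α hα hαn
    refine ⟨1, one_pos, fun x => ?_⟩
    exfalso
    rw [hn0] at hαn
    norm_num at hαn
    linarith
  · have hn : n ≠ 0 := hnpos.ne'
    have hint : Integrable f := integrable_of_bdd_compact hf hnn hbd hsupp
    refine ⟨czFamily D f, czFamily_subset, czFamily_sparse hD hn hint hnn, ?_⟩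
    intro α hα hαn
    have hq1 : (2:ℝ)^(-α) < 1 :=
      Real.rpow_lt_one_of_one_lt_of_neg one_lt_two (neg_lt_zero.2 hα)
    set C : ℝ := (2:ℝ)^(n+1) * (1 - (2:ℝ)^(-α))⁻¹ with hC
    have hC0 : 0 < C := mul_pos (by positivity) (inv_pos.2 (by linarith))
    refine ⟨C, hC0, fun x => ?_⟩
    set TD : ↥D → ℝ := fun Q => rieszTerm α f x ↑Q with hTD
    set TS : ↥(czFamily D f) → ℝ := fun P => rieszTerm α f x ↑P with hTS
    have hTDnn : ∀ Q, 0 ≤ TD Q := fun Q => rieszTerm_nonneg hnn α x ↑Q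
    have hTSnn : ∀ P, 0 ≤ TS P := fun P => rieszTerm_nonneg hnn α x ↑P
    rw [dyadicRiesz_eq D α x, dyadicRiesz_eq (czFamily D f) α x]
    by_cases hsum : Summable TD
    · have hkey := dominate hD hn hint hnn α hα x
      have hDsum : ENNReal.ofReal (∑' Q, TD Q) = ∑' Q, ENNReal.ofReal (TD Q) :=
        ENNReal.ofReal_tsum_of_nonneg hTDnn hsum
      have hfin : (∑' (Q : ↥D), ENNReal.ofReal (TD Q)) ≠ ⊤ := by
        rw [← hDsum]; exact ENNReal.ofReal_ne_top
      have hle : (∑' (P : ↥(czFamily D f)), ENNReal.ofReal (TS P))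
          ≤ ∑' (Q : ↥D), ENNReal.ofReal (TD Q) :=
        ENNReal.summable.tsum_le_tsum_of_inj (Set.inclusion czFamily_subset)
          (Set.inclusion_injective _) (fun _ _ => zero_le)
          (fun P => le_of_eq rfl) ENNReal.summable
      have hSfin : (∑' (P : ↥(czFamily D f)), ENNReal.ofReal (TS P)) ≠ ⊤ :=
        fun h => hfin (top_le_iff.1 (h ▸ hle))
      have hSsum : Summable TS := by
        have h2 : (∑' (P : ↥(czFamily D f)), ((TS P).toNNReal : ℝ≥0∞)) ≠ ⊤ := by
          simpa [ENNReal.ofReal] using hSfin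
        have h3 := ENNReal.tsum_coe_ne_top_iff_summable.1 h2
        have h4 : (fun P => ((TS P).toNNReal : ℝ)) = TS :=
          funext fun P => Real.coe_toNNReal _ (hTSnn P)
        exact h4 ▸ NNReal.summable_coe.2 h3
      have hSsumE : ENNReal.ofReal (∑' P, TS P) = ∑' P, ENNReal.ofReal (TS P) :=
        ENNReal.ofReal_tsum_of_nonneg hTSnn hSsum
      have hfin2 : ENNReal.ofReal (∑' Q, TD Q) ≤ ENNReal.ofReal (C * ∑' P, TS P) := by
        rw [hDsum, ENNReal.ofReal_mul hC0.le, hSsumE]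
        exact hkey
      exact (ENNReal.ofReal_le_ofReal_iff
        (mul_nonneg hC0.le (tsum_nonneg hTSnn))).1 hfin2
    · rw [tsum_eq_zero_of_not_summable hsum]
      exact mul_nonneg hC0.le (tsum_nonneg hTSnn)
end
end
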